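/- For all z in the open unit disk, |2(z+a)/(1−z²)|·(1−|z|²) ≤ 2(1+|a|), where a is a real number. -/
import Mathlib


open Complex Metric

/-- `|2(z+a)/(1−z²)|·(1−|z|²) ≤ 2(1+|a|)` on the unit disk. -/
theorem analytic_part_bound (a : ℝ) :
    ∀ z ∈ ball (0 : ℂ) 1,
      ‖(2 * (z + a) / (1 - z ^ 2) : ℂ)‖ * (1 - ‖z‖ ^ 2) ≤ 2 * (1 + |a|) := by
  intro z hz
  rw [mem_ball_zero_iff] at hz
  have hz2 : ‖z ^ 2‖ < 1 := by
    rw [norm_pow]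
    exact pow_lt_one₀ (norm_nonneg z) hz (by norm_num)
  have hden : (0 : ℝ) < ‖(1 - z ^ 2 : ℂ)‖ := by
    have := norm_sub_norm_le (1 : ℂ) (z ^ 2)
    simp only [norm_one] at this
    linarith
  have h1 : 1 - ‖z‖ ^ 2 ≤ ‖(1 - z ^ 2 : ℂ)‖ := by
    have := norm_sub_norm_le (1 : ℂ) (z ^ 2)
    simp only [norm_one, norm_pow] at this
    linarith
  have hnum : ‖(2 * (z + a) : ℂ)‖ ≤ 2 * (1 + |a|) := by
    rw [norm_mul]
    have h2 : ‖(2 : ℂ)‖ = 2 := by norm_num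
    rw [h2]
    have : ‖(z + a : ℂ)‖ ≤ ‖z‖ + ‖(a : ℂ)‖ := norm_add_le _ _
    have ha : ‖(a : ℂ)‖ = |a| := by simp [Complex.norm_real]
    nlinarith [norm_nonneg z]
  rw [norm_div]
  calc ‖(2 * (z + a) : ℂ)‖ / ‖(1 - z ^ 2 : ℂ)‖ * (1 - ‖z‖ ^ 2)
      = ‖(2 * (z + a) : ℂ)‖ * ((1 - ‖z‖ ^ 2) / ‖(1 - z ^ 2 : ℂ)‖) := by ring
    _ ≤ ‖(2 * (z + a) : ℂ)‖ * 1 := by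
        apply mul_le_mul_of_nonneg_left _ (norm_nonneg _)
        rw [div_le_one hden]; exact h1
    _ ≤ 2 * (1 + |a|) := by rw [mul_one]; exact hnum
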